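/- Let ψ be an additive character of ℚ₂ of conductor 1, let μ be the additive Haar measure on ℚ₂ with μ(ℤ₂) = 1, let n ≥ 1, and equip ℚ₂ⁿ with the product measure μⁿ. Let φ : ℚ₂ⁿ → ℂ be a locally constant function with compact support and define φ̂(y) = ∫_{ℚ₂ⁿ} ψ(2 uᵀy) φ(u) dμⁿ(u), where uᵀy = Σᵢ uᵢ yᵢ. If for every index i and every y ∈ ℚ₂ⁿ one has ψ(2 yᵢ²) φ(y) = φ(y), and for every index i and every y ∈ ℚ₂ⁿ one has ψ(2 yᵢ²) φ̂(y) = φ̂(y), then φ is a scalar multiple of the indicator function of ℤ₂ⁿ. -/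

import Mathlib

open MeasureTheory

open scoped ENNReal
open scoped ENNReal

lemma q2_norm_two : ‖(2:ℚ_[2])‖ = (2:ℝ)⁻¹ := by
  have := @Padic.norm_p 2 ⟨by norm_num⟩
  norm_num at this ⊢
  exact_mod_cast this

lemma q2_norm_two_pow (k : ℕ) : ‖(2:ℚ_[2])^k‖ = (2:ℝ)⁻¹^k := by
  rw [norm_pow, q2_norm_two]

lemma q2_exists_v {x : ℚ_[2]} (hx : x ≠ 0) : ∃ v : ℤ, ‖x‖ = (2:ℝ)^v := by
  refine ⟨-x.valuation, ?_⟩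
  rw [Padic.norm_eq_zpow_neg_valuation hx]; norm_num

lemma two_zpow_le_iff {v w : ℤ} : (2:ℝ)^v ≤ (2:ℝ)^w ↔ v ≤ w :=
  zpow_le_zpow_iff_right₀ (by norm_num)

lemma q2_nat_norm_le_one (m : ℕ) : ‖((m:ℚ_[2]))‖ ≤ 1 := by
  have := Padic.norm_int_le_one (p := 2) (m : ℤ)
  push_cast at this
  exact this

lemma q2_dvd_of_toZMod_eq_zero {z : ℤ_[2]} (h : PadicInt.toZMod z = 0) : (2:ℤ_[2]) ∣ z := by
  have : z ∈ RingHom.ker (PadicInt.toZMod : ℤ_[2] →+* ZMod 2) := h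
  rw [PadicInt.ker_toZMod, PadicInt.maximalIdeal_eq_span_p, Ideal.mem_span_singleton] at this
  exact_mod_cast this

-- norm-1 elements are ≡ 1 mod 2
lemma q2_unit_sub_one {x : ℚ_[2]} (hx : ‖x‖ = 1) : ‖x - 1‖ ≤ (2:ℝ)⁻¹ := by
  set z : ℤ_[2] := ⟨x, le_of_eq hx⟩ with hz
  have hz1 : ‖z‖ = 1 := by rw [PadicInt.norm_def]; exact hx
  have h2 : PadicInt.toZMod z ≠ 0 := by
    intro h
    have := (PadicInt.norm_lt_one_iff_dvd z).mpr (q2_dvd_of_toZMod_eq_zero h)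
    rw [hz1] at this; exact lt_irrefl _ this
  have h3 : PadicInt.toZMod z = 1 := by
    have : ∀ t : ZMod 2, t ≠ 0 → t = 1 := by decide
    exact this _ h2
  have h4 : (2:ℤ_[2]) ∣ (z - 1) := by
    apply q2_dvd_of_toZMod_eq_zero
    rw [map_sub, h3, map_one, sub_self]
  obtain ⟨w, hw⟩ := h4
  have key : ‖z - 1‖ ≤ (2:ℝ)⁻¹ := by
    rw [hw, norm_mul]
    have h2n : ‖(2:ℤ_[2])‖ = (2:ℝ)⁻¹ := by
      rw [PadicInt.norm_def]; exact_mod_cast q2_norm_two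
    rw [h2n]
    calc (2:ℝ)⁻¹ * ‖w‖ ≤ (2:ℝ)⁻¹ * 1 :=
          mul_le_mul_of_nonneg_left (PadicInt.norm_le_one w) (by norm_num)
      _ = (2:ℝ)⁻¹ := mul_one _
  rw [PadicInt.norm_def] at key
  have : ((z - 1 : ℤ_[2]) : ℚ_[2]) = x - 1 := by push_cast [hz]; rfl
  rwa [this] at key

section PsiFacts
variable {ψ : ℚ_[2] → ℂ}
  (hhom : ∀ x y : ℚ_[2], ψ (x + y) = ψ x * ψ y)
  (hcircle : ∀ x : ℚ_[2], ‖ψ x‖ = 1)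
  (htriv : ∀ x : ℚ_[2], ‖x‖ ≤ (2 : ℝ)⁻¹ → ψ x = 1)

include hhom hcircle in
lemma psi_zero : ψ 0 = 1 := by
  have h := hhom 0 0
  rw [add_zero] at h
  have hne : ψ 0 ≠ 0 := by
    intro h0; have := hcircle 0; rw [h0] at this; simp at this
  field_simp at h
  tauto

include hhom hcircle in
lemma psi_nat (m : ℕ) (x : ℚ_[2]) : ψ ((m:ℚ_[2]) * x) = ψ x ^ m := by
  induction m with
  | zero => simpa using psi_zero hhom hcircle
  | succ j ih =>
    have : ((j+1 : ℕ):ℚ_[2]) * x = (j:ℚ_[2]) * x + x := by push_cast; ring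
    rw [this, hhom, ih, pow_succ]

include hhom hcircle htriv in
lemma psi_norm_one {x : ℚ_[2]} (hx : ‖x‖ = 1) : ψ x = ψ 1 := by
  have : x = 1 + (x - 1) := by ring
  rw [this, hhom, htriv _ (q2_unit_sub_one hx), mul_one]

include hhom hcircle htriv in
lemma psi_one (hnontriv : ∃ x : ℚ_[2], ‖x‖ ≤ 1 ∧ ψ x ≠ 1) : ψ 1 = -1 := by
  obtain ⟨x, hx1, hx2⟩ := hnontriv
  have hxn : ‖x‖ = 1 := by
    rcases le_or_gt ‖x‖ (2:ℝ)⁻¹ with h | h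
    · exact absurd (htriv _ h) hx2
    · have hx0 : x ≠ 0 := by intro h0; rw [h0] at h; simp at h; linarith
      obtain ⟨v, hv⟩ := q2_exists_v hx0
      rw [hv] at hx1 h ⊢
      have h1 : v ≤ 0 := by
        have := two_zpow_le_iff.mp (by simpa using hx1 : (2:ℝ)^v ≤ (2:ℝ)^(0:ℤ))
        exact this
      have h2 : (0:ℤ) ≤ v := by
        by_contra hc
        push_neg at hc
        have : v ≤ -1 := by omega
        have := two_zpow_le_iff.mpr this
        have h2' : (2:ℝ)^(-1:ℤ) = (2:ℝ)⁻¹ := by norm_num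
        rw [h2'] at this
        linarith
      have : v = 0 := le_antisymm h1 h2
      rw [this]; norm_num
  have heq := psi_norm_one hhom hcircle htriv hxn
  have hsq : ψ 1 * ψ 1 = 1 := by
    rw [← hhom]
    apply htriv
    have : (1:ℚ_[2]) + 1 = 2 := by norm_num
    rw [this, q2_norm_two]
  rcases mul_self_eq_one_iff.mp hsq with h | h
  · rw [heq, h] at hx2; exact absurd rfl hx2
  · exact h

include hhom hcircle htriv in
lemma psi_ne_one (hnontriv : ∃ x : ℚ_[2], ‖x‖ ≤ 1 ∧ ψ x ≠ 1)
    {w : ℚ_[2]} (hw : 1 ≤ ‖w‖) : ψ w ≠ 1 := by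
  have hw0 : w ≠ 0 := by intro h0; rw [h0] at hw; simp at hw; linarith
  obtain ⟨v, hv⟩ := q2_exists_v hw0
  have hv0 : 0 ≤ v := by
    have : (2:ℝ)^(0:ℤ) ≤ (2:ℝ)^v := by rw [hv] at hw; simpa using hw
    exact two_zpow_le_iff.mp this
  set j := v.toNat with hj
  have hnorm : ‖(2:ℚ_[2])^j * w‖ = 1 := by
    rw [norm_mul, q2_norm_two_pow, hv]
    rw [inv_pow, ← zpow_natCast (2:ℝ), ← zpow_neg]
    rw [← zpow_add₀ (by norm_num : (2:ℝ) ≠ 0)]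
    have : (j:ℤ) = v := Int.toNat_of_nonneg hv0
    rw [this]; norm_num
  have h1 : ψ ((2:ℚ_[2])^j * w) = -1 := by
    rw [psi_norm_one hhom hcircle htriv hnorm]
    exact psi_one hhom hcircle htriv hnontriv
  have h2 : ψ ((2:ℚ_[2])^j * w) = ψ w ^ (2^j) := by
    have : ((2^j : ℕ) : ℚ_[2]) = (2:ℚ_[2])^j := by push_cast; ring
    rw [← this, psi_nat hhom hcircle]
  intro hcon
  rw [hcon, one_pow] at h2
  rw [h2] at h1
  norm_num at h1

include hhom hcircle in
lemma psi_sum {ι : Type*} (s : Finset ι) (f : ι → ℚ_[2]) :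
    ψ (∑ i ∈ s, f i) = ∏ i ∈ s, ψ (f i) := by
  induction s using Finset.cons_induction with
  | empty => simpa using psi_zero hhom hcircle
  | cons a s hni ih =>
    rw [Finset.sum_cons, Finset.prod_cons, hhom, ih]

end PsiFacts
section CharSum
variable {ψ : ℚ_[2] → ℂ}
  (hhom : ∀ x y : ℚ_[2], ψ (x + y) = ψ x * ψ y)
  (hcircle : ∀ x : ℚ_[2], ‖ψ x‖ = 1)
  (htriv : ∀ x : ℚ_[2], ‖x‖ ≤ (2 : ℝ)⁻¹ → ψ x = 1)

include hhom hcircle htriv in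
lemma char_sum (hnontriv : ∃ x : ℚ_[2], ‖x‖ ≤ 1 ∧ ψ x ≠ 1)
    (k : ℕ) (a : ℚ_[2]) (ha : ‖a‖ ≤ 1) :
    ∑ j ∈ Finset.range (2^k), ψ (2 * (a * ((j:ℚ_[2]) * ((2:ℚ_[2])^k)⁻¹)))
      = if ‖a‖ ≤ (2:ℝ)⁻¹^k then ((2^k : ℕ) : ℂ) else 0 := by
  set c : ℚ_[2] := ((2:ℚ_[2])^k)⁻¹ with hc
  have hcn : ‖c‖ = (2:ℝ)^k := by
    rw [hc, norm_inv, q2_norm_two_pow, inv_pow, inv_inv]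
  have hterm : ∀ j : ℕ, ψ (2 * (a * ((j:ℚ_[2]) * c))) = ψ (2 * (a * c)) ^ j := by
    intro j
    have : 2 * (a * ((j:ℚ_[2]) * c)) = (j:ℚ_[2]) * (2 * (a * c)) := by ring
    rw [this, psi_nat hhom hcircle]
  by_cases hA : ‖a‖ ≤ (2:ℝ)⁻¹^k
  · rw [if_pos hA]
    have : ∀ j ∈ Finset.range (2^k), ψ (2 * (a * ((j:ℚ_[2]) * c))) = 1 := by
      intro j _
      apply htriv
      have : ‖2 * (a * ((j:ℚ_[2]) * c))‖ = ‖(2:ℚ_[2])‖ * (‖a‖ * (‖(j:ℚ_[2])‖ * ‖c‖)) := by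
        rw [norm_mul, norm_mul, norm_mul]
      rw [this, q2_norm_two, hcn]
      calc (2:ℝ)⁻¹ * (‖a‖ * (‖(j:ℚ_[2])‖ * (2:ℝ)^k))
          ≤ (2:ℝ)⁻¹ * ((2:ℝ)⁻¹^k * (1 * (2:ℝ)^k)) := by
            gcongr
            exact q2_nat_norm_le_one j
        _ = (2:ℝ)⁻¹ := by
            rw [one_mul, inv_pow]
            field_simp
      done
    rw [Finset.sum_congr rfl this, Finset.sum_const, Finset.card_range]
    simp
  · rw [if_neg hA]
    push_neg at hA
    have ha0 : a ≠ 0 := by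
      intro h0
      rw [h0, norm_zero] at hA
      have hpos : (0:ℝ) < (2:ℝ)⁻¹^k := by positivity
      linarith
    obtain ⟨v, hv⟩ := q2_exists_v ha0
    set ζ : ℂ := ψ (2 * (a * c)) with hζ
    have hnz : ‖2 * (a * c)‖ = (2:ℝ)^(v + k - 1) := by
      rw [norm_mul, norm_mul, q2_norm_two, hcn, hv]
      rw [show (2:ℝ)⁻¹ = (2:ℝ)^(-1:ℤ) by norm_num, ← zpow_natCast (2:ℝ) k]
      rw [← zpow_add₀ (by norm_num : (2:ℝ) ≠ 0), ← zpow_add₀ (by norm_num : (2:ℝ) ≠ 0)]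
      congr 1
      ring
    have hge : 1 ≤ ‖2 * (a * c)‖ := by
      rw [hnz]
      have hvk : 0 ≤ v + k - 1 := by
        -- from hA : 2⁻¹^k < ‖a‖ = 2^v, so -k < v
        rw [hv] at hA
        have : (2:ℝ)^(-(k:ℤ)) < (2:ℝ)^v := by
          rw [zpow_neg, zpow_natCast]
          rw [← inv_pow]
          exact hA
        have hlt : -(k:ℤ) < v := by
          by_contra hcon
          push_neg at hcon
          exact absurd (two_zpow_le_iff.mpr hcon) this.not_ge
        omega
      calc (1:ℝ) = (2:ℝ)^(0:ℤ) := by norm_num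
        _ ≤ _ := two_zpow_le_iff.mpr hvk
    have hζne : ζ ≠ 1 := psi_ne_one hhom hcircle htriv hnontriv hge
    have hζpow : ζ ^ (2^k) = 1 := by
      rw [hζ, ← psi_nat hhom hcircle]
      have h1 : ((2^k : ℕ) : ℚ_[2]) * (2 * (a * c)) = 2 * a := by
        rw [hc]
        push_cast
        field_simp
      rw [h1]
      apply htriv
      rw [norm_mul, q2_norm_two]
      calc (2:ℝ)⁻¹ * ‖a‖ ≤ (2:ℝ)⁻¹ * 1 := by gcongr
        _ = (2:ℝ)⁻¹ := mul_one _
    calc ∑ j ∈ Finset.range (2^k), ψ (2 * (a * ((j:ℚ_[2]) * c)))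
        = ∑ j ∈ Finset.range (2^k), ζ ^ j := Finset.sum_congr rfl (fun j _ => hterm j)
      _ = (ζ ^ (2^k) - 1) / (ζ - 1) := geom_sum_eq hζne _
      _ = 0 := by rw [hζpow]; simp

end CharSum
section MeasureFacts
open MeasureTheory
open scoped ENNReal
variable [MeasurableSpace ℚ_[2]] [BorelSpace ℚ_[2]]

lemma q2_ball_meas (c : ℚ_[2]) (r : ℝ) : MeasurableSet {x : ℚ_[2] | ‖x - c‖ ≤ r} :=
  (isClosed_le ((continuous_id.sub continuous_const).norm) continuous_const).measurableSet

lemma q2_ball_translate (μ : Measure ℚ_[2]) [μ.IsAddHaarMeasure] (c : ℚ_[2]) (r : ℝ) :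
    μ {x : ℚ_[2] | ‖x - c‖ ≤ r} = μ {x : ℚ_[2] | ‖x‖ ≤ r} := by
  have h : {x : ℚ_[2] | ‖x - c‖ ≤ r} = (fun h => -c + h) ⁻¹' {x : ℚ_[2] | ‖x‖ ≤ r} := by
    ext x
    simp [Set.mem_preimage, neg_add_eq_sub]
  rw [h, measure_preimage_add]

lemma q2_ball_split (k : ℕ) :
    {x : ℚ_[2] | ‖x‖ ≤ (2:ℝ)⁻¹^k} =
      {x : ℚ_[2] | ‖x‖ ≤ (2:ℝ)⁻¹^(k+1)} ∪ {x : ℚ_[2] | ‖x - 2^k‖ ≤ (2:ℝ)⁻¹^(k+1)} := by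
  ext x
  simp only [Set.mem_setOf_eq, Set.mem_union]
  constructor
  · intro hx
    by_cases h : ‖x‖ ≤ (2:ℝ)⁻¹^(k+1)
    · left; exact h
    · right
      push_neg at h
      have hx0 : x ≠ 0 := by
        rintro rfl
        rw [norm_zero] at h
        have : (0:ℝ) < (2:ℝ)⁻¹^(k+1) := by positivity
        linarith
      obtain ⟨v, hv⟩ := q2_exists_v hx0
      have hveq : v = -(k:ℤ) := by
        rw [hv] at hx h
        have h1 : v ≤ -(k:ℤ) := by
          apply two_zpow_le_iff.mp
          rw [show ((2:ℝ)^(-(k:ℤ))) = (2:ℝ)⁻¹^k by rw [zpow_neg, zpow_natCast, inv_pow]]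
          exact hx
        have h2 : -(k:ℤ)-1 < v := by
          by_contra hc
          push_neg at hc
          have := two_zpow_le_iff.mpr hc
          have he : ((2:ℝ)^(-(k:ℤ)-1)) = (2:ℝ)⁻¹^(k+1) := by
            rw [inv_pow, ← zpow_natCast (2:ℝ) (k+1), ← zpow_neg]
            congr 1
            push_cast
            ring
          rw [← he] at h
          linarith
        omega
      have hu : ‖x * ((2:ℚ_[2])^k)⁻¹‖ = 1 := by
        rw [norm_mul, norm_inv, q2_norm_two_pow, hv, hveq]
        rw [inv_pow, inv_inv, zpow_neg, zpow_natCast]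
        rw [inv_mul_cancel₀ (by positivity)]
      have hsub := q2_unit_sub_one hu
      have hxe : x - 2^k = 2^k * (x * ((2:ℚ_[2])^k)⁻¹ - 1) := by
        field_simp
      rw [hxe, norm_mul, q2_norm_two_pow]
      calc (2:ℝ)⁻¹^k * ‖x * ((2:ℚ_[2])^k)⁻¹ - 1‖ ≤ (2:ℝ)⁻¹^k * (2:ℝ)⁻¹ := by
            gcongr
        _ = (2:ℝ)⁻¹^(k+1) := by rw [pow_succ]
  · intro h
    rcases h with h | h
    · refine le_trans h ?_
      apply pow_le_pow_of_le_one (by norm_num) (by norm_num)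
      omega
    · have hxe : x = (x - 2^k) + 2^k := by ring
      rw [hxe]
      refine le_trans (Padic.nonarchimedean _ _) ?_
      apply max_le
      · refine le_trans h ?_
        apply pow_le_pow_of_le_one (by norm_num) (by norm_num)
        omega
      · rw [q2_norm_two_pow]

lemma q2_ball_measure (μ : Measure ℚ_[2]) [μ.IsAddHaarMeasure]
    (hμ : μ {x : ℚ_[2] | ‖x‖ ≤ 1} = 1) (k : ℕ) :
    μ {x : ℚ_[2] | ‖x‖ ≤ (2:ℝ)⁻¹^k} = ((2:ℝ≥0∞)^k)⁻¹ := by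
  induction k with
  | zero => simpa using hμ
  | succ k ih =>
    have hdisj : Disjoint {x : ℚ_[2] | ‖x‖ ≤ (2:ℝ)⁻¹^(k+1)}
        {x : ℚ_[2] | ‖x - 2^k‖ ≤ (2:ℝ)⁻¹^(k+1)} := by
      rw [Set.disjoint_left]
      intro x h1 h2
      simp only [Set.mem_setOf_eq] at h1 h2
      have hxe : (2:ℚ_[2])^k = x - (x - 2^k) := by ring
      have h3 : ‖(2:ℚ_[2])^k‖ ≤ (2:ℝ)⁻¹^(k+1) := by
        rw [hxe, sub_eq_add_neg]
        refine le_trans (Padic.nonarchimedean _ _) ?_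
        rw [norm_neg]
        exact max_le h1 h2
      rw [q2_norm_two_pow] at h3
      have h4 : (2:ℝ)⁻¹^(k+1) < (2:ℝ)⁻¹^k := by
        apply pow_lt_pow_right_of_lt_one₀ (by norm_num) (by norm_num)
        omega
      linarith
    have hum : μ {x : ℚ_[2] | ‖x‖ ≤ (2:ℝ)⁻¹^k}
        = μ {x : ℚ_[2] | ‖x‖ ≤ (2:ℝ)⁻¹^(k+1)} + μ {x : ℚ_[2] | ‖x - 2^k‖ ≤ (2:ℝ)⁻¹^(k+1)} := by
      rw [q2_ball_split k]
      exact measure_union hdisj (q2_ball_meas _ _)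
    rw [q2_ball_translate μ _ _] at hum
    rw [ih] at hum
    set m := μ {x : ℚ_[2] | ‖x‖ ≤ (2:ℝ)⁻¹^(k+1)} with hm
    have h2m : (2:ℝ≥0∞) * m = ((2:ℝ≥0∞)^k)⁻¹ := by rw [two_mul]; exact hum.symm
    have : m = 2⁻¹ * ((2:ℝ≥0∞)^k)⁻¹ := by
      rw [← h2m, ← mul_assoc, ENNReal.inv_mul_cancel two_ne_zero ENNReal.ofNat_ne_top, one_mul]
    rw [this, pow_succ, ENNReal.mul_inv (Or.inl (by positivity)) (Or.inl (by simp)), mul_comm]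

lemma pi_ball_measure (μ : Measure ℚ_[2]) [μ.IsAddHaarMeasure]
    (hμ : μ {x : ℚ_[2] | ‖x‖ ≤ 1} = 1) (n k : ℕ) (x : Fin n → ℚ_[2]) :
    Measure.pi (fun _ : Fin n => μ)
      (Set.univ.pi fun i => {t : ℚ_[2] | ‖t - x i‖ ≤ (2:ℝ)⁻¹^k})
      = (((2:ℝ≥0∞)^k)⁻¹)^n := by
  rw [Measure.pi_pi]
  have : ∀ i : Fin n, μ {t : ℚ_[2] | ‖t - x i‖ ≤ (2:ℝ)⁻¹^k} = ((2:ℝ≥0∞)^k)⁻¹ := by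
    intro i
    rw [q2_ball_translate, q2_ball_measure μ hμ]
  rw [Finset.prod_congr rfl (fun i _ => this i), Finset.prod_const, Finset.card_univ,
    Fintype.card_fin]

end MeasureFacts

set_option maxHeartbeats 1000000 in
/-- Let `ψ` be an additive character of `ℚ₂` of conductor `1`, `μ` the additive Haar
measure on `ℚ₂` with `μ(ℤ₂) = 1`, `n ≥ 1`, and equip `ℚ₂ⁿ` with the product measure
`μⁿ`.  Let `φ : ℚ₂ⁿ → ℂ` be locally constant with compact support, with Fourier
transform `φ̂ y = ∫ ψ(2 uᵀy) φ u dμⁿ(u)` where `uᵀy = Σᵢ uᵢ yᵢ`.  If for every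
index `i` and every `y` one has `ψ(2 yᵢ²) φ y = φ y` and `ψ(2 yᵢ²) φ̂ y = φ̂ y`,
then `φ` is a scalar multiple of the indicator function of `ℤ₂ⁿ`. -/
theorem invariant_vector_is_indicator_pi (ψ : ℚ_[2] → ℂ)
    [MeasurableSpace ℚ_[2]] [BorelSpace ℚ_[2]]
    (hcont : Continuous ψ)
    (hhom : ∀ x y : ℚ_[2], ψ (x + y) = ψ x * ψ y)
    (hcircle : ∀ x : ℚ_[2], ‖ψ x‖ = 1)
    (htriv : ∀ x : ℚ_[2], ‖x‖ ≤ (2 : ℝ)⁻¹ → ψ x = 1)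
    (hnontriv : ∃ x : ℚ_[2], ‖x‖ ≤ 1 ∧ ψ x ≠ 1)
    (μ : Measure ℚ_[2]) [μ.IsAddHaarMeasure]
    (hμ : μ {x : ℚ_[2] | ‖x‖ ≤ 1} = 1)
    (n : ℕ) (hn : 1 ≤ n)
    (φ : (Fin n → ℚ_[2]) → ℂ) (hlc : IsLocallyConstant φ) (hcs : HasCompactSupport φ)
    (φhat : (Fin n → ℚ_[2]) → ℂ)
    (hφhat : ∀ y : Fin n → ℚ_[2],
      φhat y = ∫ u, ψ (2 * ∑ i, u i * y i) * φ u ∂(Measure.pi fun _ : Fin n => μ))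
    (hx : ∀ (i : Fin n) (y : Fin n → ℚ_[2]), ψ (2 * y i ^ 2) * φ y = φ y)
    (hy : ∀ (i : Fin n) (y : Fin n → ℚ_[2]), ψ (2 * y i ^ 2) * φhat y = φhat y) :
    ∃ a : ℂ, φ = fun y =>
      a * Set.indicator {x : Fin n → ℚ_[2] | ∀ i, ‖x i‖ ≤ 1} (fun _ => (1 : ℂ)) y := by
  classical
  set Mpi : Measure (Fin n → ℚ_[2]) := Measure.pi fun _ : Fin n => μ with hMpi
  -- support property
  have hsupp : ∀ (g : (Fin n → ℚ_[2]) → ℂ), (∀ i y, ψ (2 * y i ^ 2) * g y = g y) →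
      ∀ (y : Fin n → ℚ_[2]) (i : Fin n), 1 < ‖y i‖ → g y = 0 := by
    intro g hg y i hi
    have hne : ψ (2 * y i ^ 2) ≠ 1 := by
      apply psi_ne_one hhom hcircle htriv hnontriv
      rw [norm_mul, q2_norm_two, norm_pow]
      have h2 : (2:ℝ) ≤ ‖y i‖ := by
        have hy0 : y i ≠ 0 := by
          intro h0; rw [h0, norm_zero] at hi; linarith
        obtain ⟨v, hv⟩ := q2_exists_v hy0
        rw [hv] at hi ⊢
        have hv1 : (1:ℤ) ≤ v := by
          by_contra hc; push_neg at hc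
          have hc' : v ≤ 0 := by omega
          have := two_zpow_le_iff.mpr hc'
          have h0 : ((2:ℝ)^(0:ℤ)) = 1 := by norm_num
          rw [h0] at this
          linarith
        calc (2:ℝ) = (2:ℝ)^(1:ℤ) := by norm_num
          _ ≤ (2:ℝ)^v := two_zpow_le_iff.mpr hv1
      nlinarith [norm_nonneg (y i)]
    by_contra hgy
    have := hg i y
    exact hne (mul_right_cancel₀ hgy (by rw [this, one_mul]))
  -- main claim: φ is constant on the unit polydisc
  have key : ∀ x : Fin n → ℚ_[2], (∀ i, ‖x i‖ ≤ 1) → φ x = φhat 0 := by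
    intro x hx1
    obtain ⟨k, hk⟩ : ∃ k : ℕ, ∀ u : Fin n → ℚ_[2],
        (∀ i, ‖u i - x i‖ ≤ (2:ℝ)⁻¹^k) → φ u = φ x := by
      obtain ⟨ε, hε, hball⟩ := Metric.isOpen_iff.mp (hlc {φ x}) x rfl
      obtain ⟨k, hk⟩ := exists_pow_lt_of_lt_one hε (by norm_num : (2:ℝ)⁻¹ < 1)
      refine ⟨k, fun u hu => ?_⟩
      have hd : dist u x < ε := by
        refine lt_of_le_of_lt ?_ hk
        rw [dist_pi_le_iff (by positivity)]
        intro i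
        rw [dist_eq_norm]
        exact hu i
      exact hball (Metric.mem_ball.mpr hd)
    set N := 2^k with hN
    haveI : NeZero N := ⟨pow_ne_zero k two_ne_zero⟩
    set c : ℚ_[2] := ((2:ℚ_[2])^k)⁻¹ with hc
    have hcn : ‖c‖ = (2:ℝ)^(k:ℤ) := by
      rw [hc, norm_inv, q2_norm_two_pow, inv_pow, inv_inv, zpow_natCast]
    set Z : (Fin n → Fin N) → (Fin n → ℚ_[2]) := fun m i => ((m i : ℕ) : ℚ_[2]) * c with hZ
    set S : Set (Fin n → ℚ_[2]) :=
      Set.univ.pi fun i => {t : ℚ_[2] | ‖t - x i‖ ≤ (2:ℝ)⁻¹^k} with hS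
    have hSmeas : MeasurableSet S := MeasurableSet.univ_pi fun i => q2_ball_meas (x i) _
    have hint : ∀ w : Fin n → ℚ_[2],
        Integrable (fun u : Fin n → ℚ_[2] => ψ (2 * ∑ i, (u i - x i) * w i) * φ u) Mpi := by
      intro w
      apply Continuous.integrable_of_hasCompactSupport
      · refine Continuous.mul (hcont.comp ?_) hlc.continuous
        refine Continuous.mul (continuous_const : Continuous fun _ : Fin n → ℚ_[2] => (2:ℚ_[2])) ?_
        refine continuous_finset_sum _ fun i _ => ?_
        exact ((continuous_apply i).sub continuous_const).mul continuous_const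
      · exact hcs.mul_left
    have hZval : ∀ (m : Fin n → Fin N) (i : Fin n), m i ≠ 0 → 1 < ‖Z m i‖ := by
      intro m i hmi
      have hval : 0 < (m i : ℕ) := Nat.pos_of_ne_zero (fun h => hmi (Fin.ext (by simp [h])))
      have hndvd : ¬ ((2:ℤ)^k ∣ ((m i : ℕ) : ℤ)) := by
        intro hd
        have h1 := Int.le_of_dvd (by exact_mod_cast hval) hd
        have h2 : (m i : ℕ) < 2^k := (m i).isLt
        have : ((2:ℤ))^k ≤ ((m i : ℕ) : ℤ) := h1
        have h3 : (2:ℤ)^k = ((2^k : ℕ) : ℤ) := by push_cast; ring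
        omega
      have hgt : (2:ℝ)^(-(k:ℤ)) < ‖(((m i : ℕ)) : ℚ_[2])‖ := by
        by_contra hle
        push_neg at hle
        apply hndvd
        have hle' : ‖((((m i : ℕ) : ℤ)) : ℚ_[2])‖ ≤ ((2:ℕ):ℝ)^(-(k:ℤ)) := by
          push_cast at hle ⊢
          exact hle
        exact (Padic.norm_int_le_pow_iff_dvd _ _).mp hle'
      have : ‖Z m i‖ = ‖(((m i : ℕ)) : ℚ_[2])‖ * (2:ℝ)^(k:ℤ) := by
        rw [hZ]; simp only []; rw [norm_mul, hcn]
      rw [this]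
      calc (1:ℝ) = (2:ℝ)^(-(k:ℤ)) * (2:ℝ)^(k:ℤ) := by
            rw [← zpow_add₀ (by norm_num : (2:ℝ) ≠ 0)]; norm_num
        _ < _ := by
            apply mul_lt_mul_of_pos_right hgt
            positivity
    have hchain : φhat 0 = φ x := by
      calc φhat 0
          = ∑ m : Fin n → Fin N, ψ (2 * ∑ i, (-(x i)) * Z m i) * φhat (Z m) := by
            rw [Finset.sum_eq_single (0 : Fin n → Fin N)]
            · have hZ0 : Z 0 = fun _ => 0 := by
                funext i; rw [hZ]; simp
              rw [hZ0]
              have h0 : (2:ℚ_[2]) * ∑ i : Fin n, (-(x i)) * (0:ℚ_[2]) = 0 := by simp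
              rw [h0, psi_zero hhom hcircle, one_mul]
              congr 1
            · intro m _ hm
              obtain ⟨i, hi⟩ := Function.ne_iff.mp hm
              rw [hsupp φhat hy (Z m) i (hZval m i hi), mul_zero]
            · intro habs
              exact absurd (Finset.mem_univ _) habs
        _ = ∑ m : Fin n → Fin N, ∫ u, ψ (2 * ∑ i, (u i - x i) * Z m i) * φ u ∂Mpi := by
            refine Finset.sum_congr rfl fun m _ => ?_
            rw [hφhat (Z m), ← integral_const_mul]
            congr 1
            funext u
            rw [← mul_assoc, ← hhom]
            congr 2
            rw [← mul_add, ← Finset.sum_add_distrib]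
            congr 1
            refine Finset.sum_congr rfl fun i _ => ?_
            ring
        _ = ∫ u, ∑ m : Fin n → Fin N, ψ (2 * ∑ i, (u i - x i) * Z m i) * φ u ∂Mpi :=
            (integral_finset_sum _ fun m _ => hint (Z m)).symm
        _ = ∫ u, ((N:ℂ))^n * S.indicator φ u ∂Mpi := by
            congr 1
            funext u
            by_cases hu : φ u = 0
            · rw [Set.indicator_apply]
              simp [hu]
            · have hu1 : ∀ i, ‖u i‖ ≤ 1 := by
                intro i; by_contra hcon; push_neg at hcon
                exact hu (hsupp φ hx u i hcon)
              have ha : ∀ i, ‖u i - x i‖ ≤ 1 := by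
                intro i
                rw [sub_eq_add_neg]
                refine le_trans (Padic.nonarchimedean _ _) (max_le (hu1 i) ?_)
                rw [norm_neg]; exact hx1 i
              rw [← Finset.sum_mul]
              have h1 : ∀ m : Fin n → Fin N, ψ (2 * ∑ i, (u i - x i) * Z m i)
                  = ∏ i, ψ (2 * ((u i - x i) * (((m i : ℕ):ℚ_[2]) * c))) := by
                intro m
                rw [Finset.mul_sum, psi_sum hhom hcircle]
              rw [Finset.sum_congr rfl fun m _ => h1 m]
              have h2 : (∑ m : Fin n → Fin N, ∏ i, ψ (2 * ((u i - x i) * (((m i : ℕ):ℚ_[2]) * c))))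
                  = ∏ i, ∑ j : Fin N, ψ (2 * ((u i - x i) * (((j : ℕ):ℚ_[2]) * c))) := by
                rw [Finset.prod_univ_sum]
                rw [Fintype.piFinset_univ]
              rw [h2]
              have h3 : ∀ i : Fin n, (∑ j : Fin N, ψ (2 * ((u i - x i) * (((j : ℕ):ℚ_[2]) * c))))
                  = if ‖u i - x i‖ ≤ (2:ℝ)⁻¹^k then ((N:ℕ):ℂ) else 0 := by
                intro i
                rw [Fin.sum_univ_eq_sum_range (fun j => ψ (2 * ((u i - x i) * (((j : ℕ):ℚ_[2]) * c)))) N]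
                exact char_sum hhom hcircle htriv hnontriv k _ (ha i)
              rw [Finset.prod_congr rfl fun i _ => h3 i]
              by_cases hin : ∀ i, ‖u i - x i‖ ≤ (2:ℝ)⁻¹^k
              · rw [Finset.prod_congr rfl fun i _ => if_pos (hin i), Finset.prod_const]
                have huS : u ∈ S := by
                  rw [hS, Set.mem_univ_pi]
                  exact fun i => hin i
                rw [Set.indicator_of_mem huS]
                simp
              · push_neg at hin
                obtain ⟨i0, hi0⟩ := hin
                have hzero : (∏ i : Fin n, if ‖u i - x i‖ ≤ (2:ℝ)⁻¹^k then ((N:ℕ):ℂ) else 0) = 0 :=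
                  Finset.prod_eq_zero (Finset.mem_univ i0) (if_neg (not_le.mpr hi0))
                rw [hzero]
                have huS : u ∉ S := by
                  intro hS'
                  rw [hS, Set.mem_univ_pi] at hS'
                  exact absurd (hS' i0) (not_le.mpr hi0)
                rw [Set.indicator_of_notMem huS, mul_zero, zero_mul]
        _ = ((N:ℂ))^n * ∫ u in S, φ u ∂Mpi := by
            rw [integral_const_mul, integral_indicator hSmeas]
        _ = ((N:ℂ))^n * ((Mpi S).toReal • φ x) := by
            congr 1
            have hconst : Set.EqOn φ (fun _ => φ x) S := by
              intro u huS
              rw [hS, Set.mem_univ_pi] at huS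
              exact hk u huS
            rw [setIntegral_congr_fun hSmeas hconst, setIntegral_const]
            rfl
        _ = φ x := by
            have hSval : Mpi S = (((2:ℝ≥0∞)^k)⁻¹)^n := by
              rw [hMpi, hS]
              exact pi_ball_measure μ hμ n k x
            rw [hSval]
            have htr : ((((2:ℝ≥0∞)^k)⁻¹)^n).toReal = (((2:ℝ)^k)⁻¹)^n := by
              rw [ENNReal.toReal_pow, ENNReal.toReal_inv, ENNReal.toReal_pow]
              norm_num
            rw [htr, Complex.real_smul, ← mul_assoc]
            have : ((N:ℂ))^n * ((((((2:ℝ)^k)⁻¹)^n : ℝ)) : ℂ) = 1 := by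
              rw [hN]
              push_cast
              rw [← mul_pow, mul_inv_cancel₀ (pow_ne_zero k (two_ne_zero (α := ℂ))), one_pow]
            rw [this, one_mul]
    exact hchain.symm
  refine ⟨φhat 0, ?_⟩
  funext y
  by_cases hb : ∀ i, ‖y i‖ ≤ 1
  · rw [Set.indicator_of_mem (by exact hb), mul_one]
    exact key y hb
  · push_neg at hb
    obtain ⟨i, hi⟩ := hb
    rw [Set.indicator_of_notMem (by simpa using ⟨i, hi⟩), mul_zero]
    exact hsupp φ hx y i hi
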